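/- Fix ρ ∈ (0,1), an integer m ≥ 1, and d ∈ (0, 1−ρ). For each integer ℓ > m, define η₁(ℓ), η₂(ℓ), η₃(ℓ), η₄(ℓ) as in the context, γ(ℓ) = (η₃(ℓ) − η₂(ℓ)(1−d) + √((η₂(ℓ)(1−d) − η₃(ℓ))² + 4η₁(ℓ)d(1−d)))/(2(1−d)), and θ(ℓ) = ρ − (η₄(ℓ)γ(ℓ) + η₁(ℓ)ρ)/(γ(ℓ)² + η₂(ℓ)γ(ℓ) + η₁(ℓ)). Then, as ℓ → ∞: (i) γ(ℓ) − ((1−ρ)d/(1−ρ−d))·ℓ^{m−1}/(m−1)! = O(ℓ^{m−2}); and (ii) θ(ℓ) − d·(d − (m−1)(1−ρ−d))/(ℓ·m·(1−ρ−d)) = O(1/ℓ²). -/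

import Mathlib

open Filter Asymptotics

/-- Binomial coefficient `C(n,k)` with integer lower index, equal to `0` when `k < 0`. -/
noncomputable def Cb (n : ℕ) (k : ℤ) : ℝ := if 0 ≤ k then (n.choose k.toNat : ℝ) else 0

noncomputable def eta1 (ℓ m : ℕ) (ρ : ℝ) : ℝ :=
  Cb (ℓ - 1) ((m : ℤ) - 1) * Cb (ℓ - 2) ((m : ℤ) - 1) * (m : ℝ) * (1 - ρ) *
    (1 + ((ℓ : ℝ) - 1) * ρ)

noncomputable def eta2 (ℓ m : ℕ) (ρ : ℝ) : ℝ :=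
  Cb (ℓ - 1) ((m : ℤ) - 1) * (1 + ((m : ℝ) - 1) * ρ)
    + Cb (ℓ - 2) ((m : ℤ) - 1) * (m : ℝ) * (1 + ((ℓ : ℝ) - 2) * ρ)
    + Cb (ℓ - 2) ((m : ℤ) - 2) * (((ℓ : ℝ) - 1) * (m : ℝ) * ρ + ((m : ℝ) - 1) * (1 - ρ))

noncomputable def eta3 (ℓ m : ℕ) (ρ : ℝ) : ℝ :=
  Cb (ℓ - 1) ((m : ℤ) - 1) * (1 + ((m : ℝ) - 1) * ρ)
    + Cb (ℓ - 2) ((m : ℤ) - 1) * ((ℓ : ℝ) - 1) * (m : ℝ) * ρ ^ 2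
    + Cb (ℓ - 2) ((m : ℤ) - 2) * ((ℓ : ℝ) - 1) * ρ * (1 + ((m : ℝ) - 1) * ρ)

noncomputable def eta4 (ℓ m : ℕ) (ρ : ℝ) : ℝ :=
  Cb (ℓ - 1) ((m : ℤ) - 1) * ρ * (1 + ((m : ℝ) - 1) * ρ)
    + Cb (ℓ - 2) ((m : ℤ) - 1) * (m : ℝ) * ρ * (1 + ((ℓ : ℝ) - 2) * ρ)
    + Cb (ℓ - 2) ((m : ℤ) - 2) * (1 + ((ℓ : ℝ) - 2) * ρ) * (1 + ((m : ℝ) - 1) * ρ)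

/-- The value `γ^{(ℓ,m)}` solving `d⁺(γ) = d`. -/
noncomputable def gammaFun (m : ℕ) (ρ d : ℝ) (ℓ : ℕ) : ℝ :=
  (eta3 ℓ m ρ - eta2 ℓ m ρ * (1 - d) +
      Real.sqrt ((eta2 ℓ m ρ * (1 - d) - eta3 ℓ m ρ) ^ 2 + 4 * eta1 ℓ m ρ * d * (1 - d))) /
    (2 * (1 - d))

/-- `θ⁺(γ^{(ℓ,m)})`. -/
noncomputable def thetaFun (m : ℕ) (ρ d : ℝ) (ℓ : ℕ) : ℝ :=
  ρ - (eta4 ℓ m ρ * gammaFun m ρ d ℓ + eta1 ℓ m ρ * ρ) /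
    ((gammaFun m ρ d ℓ) ^ 2 + eta2 ℓ m ρ * gammaFun m ρ d ℓ + eta1 ℓ m ρ)

/-! ### Auxiliary machinery -/

open Topology

lemma cast_desc (n k : ℕ) (h : k ≤ n) :
    ((n.descFactorial k : ℕ) : ℝ) = ∏ i ∈ Finset.range k, ((n:ℝ) - i) := by
  rw [Nat.descFactorial_eq_prod_range, Nat.cast_prod]
  refine Finset.prod_congr rfl fun i hi => ?_
  have : i ≤ n := le_trans (le_of_lt (Finset.mem_range.mp hi)) h
  push_cast [Nat.cast_sub this]
  ring

lemma cast_choose_real (n k : ℕ) (h : k ≤ n) :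
    ((n.choose k : ℕ) : ℝ) = (∏ i ∈ Finset.range k, ((n:ℝ) - i)) / (k.factorial : ℝ) := by
  rw [eq_div_iff (by positivity), ← cast_desc n k h, ← Nat.cast_mul, mul_comm,
    ← Nat.descFactorial_eq_factorial_mul_choose]

lemma prod_shift (ℓ k : ℕ) (s : ℝ) (hℓ : (ℓ:ℝ) ≠ 0) :
    ∏ i ∈ Finset.range k, ((ℓ:ℝ) - ((i:ℝ)+s)) =
      (ℓ:ℝ)^k * ∏ i ∈ Finset.range k, (1 - ((i:ℝ)+s)*(1/(ℓ:ℝ))) := by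
  have h : (ℓ:ℝ)^k = ∏ _i ∈ Finset.range k, (ℓ:ℝ) := by
    rw [Finset.prod_const, Finset.card_range]
  rw [h, ← Finset.prod_mul_distrib]
  refine Finset.prod_congr rfl fun i _ => ?_
  field_simp

noncomputable def q1 (m : ℕ) (t : ℝ) : ℝ :=
  (∏ i ∈ Finset.range (m-1), (1 - ((i:ℝ)+1)*t)) / ((m-1).factorial : ℝ)
noncomputable def q2 (m : ℕ) (t : ℝ) : ℝ :=
  (∏ i ∈ Finset.range (m-1), (1 - ((i:ℝ)+2)*t)) / ((m-1).factorial : ℝ)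
noncomputable def rr (m : ℕ) (t : ℝ) : ℝ :=
  if m = 1 then 0 else (∏ i ∈ Finset.range (m-2), (1 - ((i:ℝ)+2)*t)) / ((m-2).factorial : ℝ)

lemma Cb1_eq (m ℓ : ℕ) (hm : 1 ≤ m) (hℓ : m + 1 ≤ ℓ) :
    Cb (ℓ-1) ((m:ℤ)-1) = (ℓ:ℝ)^(m-1) * q1 m (1/(ℓ:ℝ)) := by
  have hℓ0 : (ℓ:ℝ) ≠ 0 := Nat.cast_ne_zero.mpr (by omega)
  have h0 : (0:ℤ) ≤ (m:ℤ)-1 := by omega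
  have ht : ((m:ℤ)-1).toNat = m-1 := by omega
  rw [Cb, if_pos h0, ht, cast_choose_real _ _ (by omega)]
  have hc : ((ℓ-1:ℕ):ℝ) = (ℓ:ℝ)-1 := by
    rw [Nat.cast_sub (by omega : 1 ≤ ℓ)]; norm_num
  rw [hc]
  have h2 : ∏ i ∈ Finset.range (m-1), ((ℓ:ℝ)-1-(i:ℝ)) =
      ∏ i ∈ Finset.range (m-1), ((ℓ:ℝ) - ((i:ℝ)+1)) :=
    Finset.prod_congr rfl (fun i _ => by ring)
  rw [h2, prod_shift ℓ (m-1) 1 hℓ0, q1]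
  ring

lemma Cb2_eq (m ℓ : ℕ) (hm : 1 ≤ m) (hℓ : m + 1 ≤ ℓ) :
    Cb (ℓ-2) ((m:ℤ)-1) = (ℓ:ℝ)^(m-1) * q2 m (1/(ℓ:ℝ)) := by
  have hℓ0 : (ℓ:ℝ) ≠ 0 := Nat.cast_ne_zero.mpr (by omega)
  have h0 : (0:ℤ) ≤ (m:ℤ)-1 := by omega
  have ht : ((m:ℤ)-1).toNat = m-1 := by omega
  rw [Cb, if_pos h0, ht, cast_choose_real _ _ (by omega)]
  have hc : ((ℓ-2:ℕ):ℝ) = (ℓ:ℝ)-2 := by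
    rw [Nat.cast_sub (by omega : 2 ≤ ℓ)]; norm_num
  rw [hc]
  have h2 : ∏ i ∈ Finset.range (m-1), ((ℓ:ℝ)-2-(i:ℝ)) =
      ∏ i ∈ Finset.range (m-1), ((ℓ:ℝ) - ((i:ℝ)+2)) :=
    Finset.prod_congr rfl (fun i _ => by ring)
  rw [h2, prod_shift ℓ (m-1) 2 hℓ0, q2]
  ring

lemma Cb3_eq (m ℓ : ℕ) (hm : 1 ≤ m) (hℓ : m + 1 ≤ ℓ) :
    Cb (ℓ-2) ((m:ℤ)-2) = (ℓ:ℝ)^(m-1) * (1/(ℓ:ℝ)) * rr m (1/(ℓ:ℝ)) := by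
  have hℓ0 : (ℓ:ℝ) ≠ 0 := Nat.cast_ne_zero.mpr (by omega)
  rcases eq_or_lt_of_le hm with h1 | h2
  · rw [rr, if_pos h1.symm, Cb, if_neg (by omega)]
    ring
  · have hm2 : 2 ≤ m := h2
    have h0 : (0:ℤ) ≤ (m:ℤ)-2 := by omega
    have ht : ((m:ℤ)-2).toNat = m-2 := by omega
    rw [Cb, if_pos h0, ht, cast_choose_real _ _ (by omega), rr, if_neg (by omega)]
    have hc : ((ℓ-2:ℕ):ℝ) = (ℓ:ℝ)-2 := by
      rw [Nat.cast_sub (by omega : 2 ≤ ℓ)]; norm_num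
    rw [hc]
    have h2' : ∏ i ∈ Finset.range (m-2), ((ℓ:ℝ)-2-(i:ℝ)) =
        ∏ i ∈ Finset.range (m-2), ((ℓ:ℝ) - ((i:ℝ)+2)) :=
      Finset.prod_congr rfl (fun i _ => by ring)
    rw [h2', prod_shift ℓ (m-2) 2 hℓ0]
    have hp : (ℓ:ℝ)^(m-1) = (ℓ:ℝ)^(m-2) * ℓ := by
      rw [← pow_succ]; congr 1; omega
    rw [hp]; field_simp

noncomputable def E1 (m : ℕ) (ρ t : ℝ) : ℝ :=
  q1 m t * q2 m t * m * (1-ρ) * (t + ρ*(1-t))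
noncomputable def E2 (m : ℕ) (ρ t : ℝ) : ℝ :=
  t * q1 m t * (1+((m:ℝ)-1)*ρ) + q2 m t * m * (t + ρ*(1-2*t))
    + t * rr m t * ((1-t)*m*ρ + t*((m:ℝ)-1)*(1-ρ))
noncomputable def E3 (m : ℕ) (ρ t : ℝ) : ℝ :=
  t * q1 m t * (1+((m:ℝ)-1)*ρ) + q2 m t * (1-t)*m*ρ^2
    + t * rr m t * (1-t)*ρ*(1+((m:ℝ)-1)*ρ)
noncomputable def E4 (m : ℕ) (ρ t : ℝ) : ℝ :=
  t * q1 m t * ρ*(1+((m:ℝ)-1)*ρ) + q2 m t * m * ρ * (t+ρ*(1-2*t))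
    + t * rr m t * (t+ρ*(1-2*t)) * (1+((m:ℝ)-1)*ρ)
noncomputable def Wf (m : ℕ) (ρ t : ℝ) : ℝ :=
  rr m t * (ρ*((1-t)*m*ρ + t*((m:ℝ)-1)*(1-ρ)) - (t+ρ*(1-2*t))*(1+((m:ℝ)-1)*ρ))
noncomputable def Sf (m : ℕ) (ρ d t : ℝ) : ℝ :=
  ((1-d)*E2 m ρ t - E3 m ρ t)^2 + 4*t*(E1 m ρ t)*d*(1-d)
noncomputable def Hf (m : ℕ) (ρ d t : ℝ) : ℝ :=
  2*d*(E1 m ρ t) / (Real.sqrt (Sf m ρ d t) + (1-d)*E2 m ρ t - E3 m ρ t)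
noncomputable def Pf (m : ℕ) (ρ d t : ℝ) : ℝ :=
  Hf m ρ d t * (ρ * Hf m ρ d t + Wf m ρ t) /
    (t * (Hf m ρ d t)^2 + E2 m ρ t * Hf m ρ d t + E1 m ρ t)

lemma eta1_eq (m ℓ : ℕ) (ρ : ℝ) (hm : 1 ≤ m) (hℓ : m + 1 ≤ ℓ) :
    eta1 ℓ m ρ = ((ℓ:ℝ)^(m-1))^2 * ℓ * E1 m ρ (1/(ℓ:ℝ)) := by
  have hℓ0 : (ℓ:ℝ) ≠ 0 := Nat.cast_ne_zero.mpr (by omega)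
  rw [eta1, Cb1_eq m ℓ hm hℓ, Cb2_eq m ℓ hm hℓ, E1]
  field_simp

lemma eta2_eq (m ℓ : ℕ) (ρ : ℝ) (hm : 1 ≤ m) (hℓ : m + 1 ≤ ℓ) :
    eta2 ℓ m ρ = (ℓ:ℝ)^(m-1) * ℓ * E2 m ρ (1/(ℓ:ℝ)) := by
  have hℓ0 : (ℓ:ℝ) ≠ 0 := Nat.cast_ne_zero.mpr (by omega)
  rw [eta2, Cb1_eq m ℓ hm hℓ, Cb2_eq m ℓ hm hℓ, Cb3_eq m ℓ hm hℓ, E2]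
  field_simp

lemma eta3_eq (m ℓ : ℕ) (ρ : ℝ) (hm : 1 ≤ m) (hℓ : m + 1 ≤ ℓ) :
    eta3 ℓ m ρ = (ℓ:ℝ)^(m-1) * ℓ * E3 m ρ (1/(ℓ:ℝ)) := by
  have hℓ0 : (ℓ:ℝ) ≠ 0 := Nat.cast_ne_zero.mpr (by omega)
  rw [eta3, Cb1_eq m ℓ hm hℓ, Cb2_eq m ℓ hm hℓ, Cb3_eq m ℓ hm hℓ, E3]
  field_simp

lemma eta4_eq (m ℓ : ℕ) (ρ : ℝ) (hm : 1 ≤ m) (hℓ : m + 1 ≤ ℓ) :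
    eta4 ℓ m ρ = (ℓ:ℝ)^(m-1) * ℓ * E4 m ρ (1/(ℓ:ℝ)) := by
  have hℓ0 : (ℓ:ℝ) ≠ 0 := Nat.cast_ne_zero.mpr (by omega)
  rw [eta4, Cb1_eq m ℓ hm hℓ, Cb2_eq m ℓ hm hℓ, Cb3_eq m ℓ hm hℓ, E4]
  field_simp

lemma W_id (m : ℕ) (ρ t : ℝ) : ρ * E2 m ρ t - E4 m ρ t = t * Wf m ρ t := by
  simp only [E2, E4, Wf]; ring

lemma gamma_abstract (ℓr e1 e2 e3 s d P : ℝ) (hℓ : ℓr ≠ 0) (hd : 1 - d ≠ 0)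
    (hD : s + (1-d)*e2 - e3 ≠ 0)
    (hs2 : s^2 = ((1-d)*e2 - e3)^2 + 4*(1/ℓr)*e1*d*(1-d)) :
    (P*ℓr*e3 - P*ℓr*e2*(1-d) + P*(ℓr*s))/(2*(1-d)) = P * (2*d*e1/(s + (1-d)*e2 - e3)) := by
  field_simp at hs2 ⊢
  linear_combination P * hs2

lemma theta_abstract (ℓr e1 e2 e4 H W P ρ : ℝ) (hℓ : ℓr ≠ 0) (hP : P ≠ 0)
    (hD : (1/ℓr)*H^2 + e2*H + e1 ≠ 0)
    (hW : ρ*e2 - e4 = (1/ℓr)*W) :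
    ρ - (P*ℓr*e4*(P*H) + P^2*ℓr*e1*ρ)/((P*H)^2 + P*ℓr*e2*(P*H) + P^2*ℓr*e1)
      = (1/ℓr)*(H*(ρ*H+W)/((1/ℓr)*H^2+e2*H+e1)) := by
  have hD2 : (P*H)^2 + P*ℓr*e2*(P*H) + P^2*ℓr*e1
      = ((1/ℓr)*H^2 + e2*H + e1)*(P^2*ℓr) := by
    field_simp
  have hP2 : (P^2*ℓr : ℝ) ≠ 0 := mul_ne_zero (pow_ne_zero 2 hP) hℓ
  rw [hD2, show P*ℓr*e4*(P*H) + P^2*ℓr*e1*ρ = (e4*H + e1*ρ)*(P^2*ℓr) by ring,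
    mul_div_mul_right _ _ hP2]
  apply mul_right_cancel₀ hD
  rw [sub_mul, div_mul_cancel₀ _ hD, mul_assoc, div_mul_cancel₀ _ hD]
  linear_combination H*hW

lemma gamma_eq (m ℓ : ℕ) (ρ d : ℝ) (hm : 1 ≤ m) (hℓ : m + 1 ≤ ℓ) (hd : 1 - d ≠ 0)
    (hS : 0 ≤ Sf m ρ d (1/(ℓ:ℝ)))
    (hD : Real.sqrt (Sf m ρ d (1/(ℓ:ℝ))) + (1-d)*E2 m ρ (1/(ℓ:ℝ)) - E3 m ρ (1/(ℓ:ℝ)) ≠ 0) :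
    gammaFun m ρ d ℓ = (ℓ:ℝ)^(m-1) * Hf m ρ d (1/(ℓ:ℝ)) := by
  have hℓ0 : (ℓ:ℝ) ≠ 0 := Nat.cast_ne_zero.mpr (by omega)
  have hℓpos : (0:ℝ) ≤ (ℓ:ℝ) := Nat.cast_nonneg ℓ
  have h1 : (eta2 ℓ m ρ*(1-d) - eta3 ℓ m ρ)^2 + 4*eta1 ℓ m ρ*d*(1-d)
      = ((ℓ:ℝ)^(m-1)*ℓ)^2 * Sf m ρ d (1/(ℓ:ℝ)) := by
    rw [eta1_eq m ℓ ρ hm hℓ, eta2_eq m ℓ ρ hm hℓ, eta3_eq m ℓ ρ hm hℓ, Sf]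
    field_simp
  have h2 : Real.sqrt ((eta2 ℓ m ρ*(1-d) - eta3 ℓ m ρ)^2 + 4*eta1 ℓ m ρ*d*(1-d))
      = (ℓ:ℝ)^(m-1)*ℓ * Real.sqrt (Sf m ρ d (1/(ℓ:ℝ))) := by
    rw [h1, Real.sqrt_mul (sq_nonneg _), Real.sqrt_sq (by positivity)]
  have hs2 : (Real.sqrt (Sf m ρ d (1/(ℓ:ℝ))))^2
      = ((1-d)*E2 m ρ (1/(ℓ:ℝ)) - E3 m ρ (1/(ℓ:ℝ)))^2
        + 4*(1/(ℓ:ℝ))*(E1 m ρ (1/(ℓ:ℝ)))*d*(1-d) := by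
    rw [Real.sq_sqrt hS, Sf]
  rw [gammaFun, h2, eta2_eq m ℓ ρ hm hℓ, eta3_eq m ℓ ρ hm hℓ, Hf]
  have := gamma_abstract (ℓ:ℝ) (E1 m ρ (1/(ℓ:ℝ))) (E2 m ρ (1/(ℓ:ℝ))) (E3 m ρ (1/(ℓ:ℝ)))
    (Real.sqrt (Sf m ρ d (1/(ℓ:ℝ)))) d ((ℓ:ℝ)^(m-1)) hℓ0 hd hD hs2
  calc ((ℓ:ℝ)^(m-1) * ℓ * E3 m ρ (1/(ℓ:ℝ)) - (ℓ:ℝ)^(m-1) * ℓ * E2 m ρ (1/(ℓ:ℝ)) * (1-d)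
        + (ℓ:ℝ)^(m-1)*ℓ * Real.sqrt (Sf m ρ d (1/(ℓ:ℝ))))/(2*(1-d))
      = ((ℓ:ℝ)^(m-1) * ℓ * E3 m ρ (1/(ℓ:ℝ)) - (ℓ:ℝ)^(m-1) * ℓ * E2 m ρ (1/(ℓ:ℝ)) * (1-d)
        + (ℓ:ℝ)^(m-1)*(ℓ * Real.sqrt (Sf m ρ d (1/(ℓ:ℝ)))))/(2*(1-d)) := by ring
    _ = (ℓ:ℝ)^(m-1) * (2*d*(E1 m ρ (1/(ℓ:ℝ)))
          / (Real.sqrt (Sf m ρ d (1/(ℓ:ℝ))) + (1-d)*E2 m ρ (1/(ℓ:ℝ)) - E3 m ρ (1/(ℓ:ℝ)))) :=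
      this

lemma theta_eq (m ℓ : ℕ) (ρ d : ℝ) (hm : 1 ≤ m) (hℓ : m + 1 ≤ ℓ) (hd : 1 - d ≠ 0)
    (hS : 0 ≤ Sf m ρ d (1/(ℓ:ℝ)))
    (hD : Real.sqrt (Sf m ρ d (1/(ℓ:ℝ))) + (1-d)*E2 m ρ (1/(ℓ:ℝ)) - E3 m ρ (1/(ℓ:ℝ)) ≠ 0)
    (hDP : (1/(ℓ:ℝ))*(Hf m ρ d (1/(ℓ:ℝ)))^2 + E2 m ρ (1/(ℓ:ℝ)) * Hf m ρ d (1/(ℓ:ℝ))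
        + E1 m ρ (1/(ℓ:ℝ)) ≠ 0) :
    thetaFun m ρ d ℓ = (1/(ℓ:ℝ)) * Pf m ρ d (1/(ℓ:ℝ)) := by
  have hℓ0 : (ℓ:ℝ) ≠ 0 := Nat.cast_ne_zero.mpr (by omega)
  have hP : ((ℓ:ℝ)^(m-1)) ≠ 0 := pow_ne_zero _ hℓ0
  rw [thetaFun, gamma_eq m ℓ ρ d hm hℓ hd hS hD, eta1_eq m ℓ ρ hm hℓ,
    eta2_eq m ℓ ρ hm hℓ, eta4_eq m ℓ ρ hm hℓ, Pf]
  exact theta_abstract (ℓ:ℝ) (E1 m ρ (1/(ℓ:ℝ))) (E2 m ρ (1/(ℓ:ℝ))) (E4 m ρ (1/(ℓ:ℝ)))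
    (Hf m ρ d (1/(ℓ:ℝ))) (Wf m ρ (1/(ℓ:ℝ))) ((ℓ:ℝ)^(m-1)) ρ hℓ0 hP hDP (W_id m ρ (1/(ℓ:ℝ)))

/-! ### Values at zero and differentiability -/

lemma q1_zero (m : ℕ) : q1 m 0 = 1/((m-1).factorial : ℝ) := by simp [q1]
lemma q2_zero (m : ℕ) : q2 m 0 = 1/((m-1).factorial : ℝ) := by simp [q2]

lemma rr_zero (m : ℕ) (hm : 1 ≤ m) : rr m 0 = ((m:ℝ)-1)/((m-1).factorial : ℝ) := by
  by_cases h : m = 1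
  · simp [rr, h]
  · have h2 : 2 ≤ m := by omega
    have hfac : ((m-1).factorial : ℝ) = ((m:ℝ)-1) * ((m-2).factorial : ℝ) := by
      rw [show m-1 = (m-2)+1 by omega, Nat.factorial_succ]
      push_cast
      have : ((m-2:ℕ):ℝ) = (m:ℝ)-2 := by
        rw [Nat.cast_sub (by omega : 2 ≤ m)]; norm_num
      rw [this]; ring
    simp only [rr, if_neg h]
    rw [hfac]
    have hne : ((m:ℝ)-1) ≠ 0 := by
      have : (2:ℝ) ≤ (m:ℝ) := by exact_mod_cast h2
      nlinarith
    have hne2 : ((m-2).factorial : ℝ) ≠ 0 := by positivity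
    field_simp
    simp

lemma E1_zero (m : ℕ) (ρ : ℝ) :
    E1 m ρ 0 = (m:ℝ)*(1-ρ)*ρ/((m-1).factorial : ℝ)^2 := by
  simp [E1, q1_zero, q2_zero]; ring

lemma E2_zero (m : ℕ) (ρ : ℝ) : E2 m ρ 0 = (m:ℝ)*ρ/((m-1).factorial : ℝ) := by
  simp [E2, q2_zero]; ring

lemma E3_zero (m : ℕ) (ρ : ℝ) : E3 m ρ 0 = (m:ℝ)*ρ^2/((m-1).factorial : ℝ) := by
  simp [E3, q2_zero]; ring

lemma Wf_zero (m : ℕ) (ρ : ℝ) (hm : 1 ≤ m) :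
    Wf m ρ 0 = -((((m:ℝ)-1))/((m-1).factorial : ℝ))*ρ*(1-ρ) := by
  rw [Wf, rr_zero m hm]; ring

lemma Sf_zero (m : ℕ) (ρ d : ℝ) :
    Sf m ρ d 0 = ((m:ℝ)*ρ*(1-ρ-d)/((m-1).factorial : ℝ))^2 := by
  simp [Sf, E2_zero, E3_zero]; ring

lemma sqrtSf_zero (m : ℕ) (ρ d : ℝ) (hρ : 0 ≤ ρ) (hΔ : 0 ≤ 1-ρ-d) :
    Real.sqrt (Sf m ρ d 0) = (m:ℝ)*ρ*(1-ρ-d)/((m-1).factorial : ℝ) := by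
  rw [Sf_zero, Real.sqrt_sq (by positivity)]

lemma DH_zero (m : ℕ) (ρ d : ℝ) (hρ : 0 ≤ ρ) (hΔ : 0 ≤ 1-ρ-d) :
    Real.sqrt (Sf m ρ d 0) + (1-d)*E2 m ρ 0 - E3 m ρ 0
      = 2*((m:ℝ)*ρ*(1-ρ-d)/((m-1).factorial : ℝ)) := by
  have hF : ((m-1).factorial : ℝ) ≠ 0 := by positivity
  rw [sqrtSf_zero m ρ d hρ hΔ, E2_zero, E3_zero]
  field_simp; ring

lemma Hf_zero (m : ℕ) (ρ d : ℝ) (hm : 1 ≤ m) (hρ : 0 < ρ) (hΔ : 0 < 1-ρ-d) :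
    Hf m ρ d 0 = (1-ρ)*d/(1-ρ-d)/((m-1).factorial : ℝ) := by
  have hF : (0:ℝ) < ((m-1).factorial : ℝ) := by positivity
  have hm0 : (0:ℝ) < (m:ℝ) := by exact_mod_cast Nat.lt_of_lt_of_le Nat.zero_lt_one hm
  rw [Hf, DH_zero m ρ d hρ.le hΔ.le, E1_zero]
  rw [div_eq_div_iff (by positivity) (by positivity)]
  field_simp

lemma Pf_zero (m : ℕ) (ρ d : ℝ) (hm : 1 ≤ m) (hρ₁ : 0 < ρ) (hρ₂ : ρ < 1)
    (hd₁ : 0 < d) (hd₂ : d < 1 - ρ) :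
    Pf m ρ d 0 = d*(d-((m:ℝ)-1)*(1-ρ-d))/((m:ℝ)*(1-ρ-d)) := by
  have hΔ : 0 < 1-ρ-d := by linarith
  have h1ρ : 0 < 1-ρ := by linarith
  have hF : (0:ℝ) < ((m-1).factorial : ℝ) := by positivity
  have hm0 : (0:ℝ) < (m:ℝ) := by exact_mod_cast Nat.lt_of_lt_of_le Nat.zero_lt_one hm
  rw [Pf, Hf_zero m ρ d hm hρ₁ hΔ, E1_zero, E2_zero, Wf_zero m ρ hm]
  set F := ((m-1).factorial : ℝ)
  have hden : (0:ℝ) * ((1-ρ)*d/(1-ρ-d)/F)^2 + (m:ℝ)*ρ/F * ((1-ρ)*d/(1-ρ-d)/F)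
      + (m:ℝ)*(1-ρ)*ρ/F^2 = (m:ℝ)*ρ*(1-ρ)^2/(F^2*(1-ρ-d)) := by
    field_simp; ring
  rw [hden, div_eq_div_iff (by positivity) (by positivity)]
  field_simp
  ring

lemma q1_diff (m : ℕ) : Differentiable ℝ (q1 m) := by
  unfold q1
  exact Differentiable.div_const (Differentiable.fun_finsetProd (fun i _ => by fun_prop)) _

lemma q2_diff (m : ℕ) : Differentiable ℝ (q2 m) := by
  unfold q2
  exact Differentiable.div_const (Differentiable.fun_finsetProd (fun i _ => by fun_prop)) _

lemma rr_diff (m : ℕ) : Differentiable ℝ (rr m) := by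
  unfold rr
  by_cases h : m = 1
  · simp only [if_pos h]; fun_prop
  · simp only [if_neg h]
    exact Differentiable.div_const (Differentiable.fun_finsetProd (fun i _ => by fun_prop)) _

lemma E1_diff (m : ℕ) (ρ : ℝ) : Differentiable ℝ (E1 m ρ) := by
  unfold E1
  exact ((((q1_diff m).mul (q2_diff m)).mul_const _).mul_const _).mul (by fun_prop)

lemma E2_diff (m : ℕ) (ρ : ℝ) : Differentiable ℝ (E2 m ρ) := by
  unfold E2
  refine Differentiable.add (Differentiable.add ?_ ?_) ?_
  · exact ((differentiable_id.mul (q1_diff m)).mul_const _)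
  · exact (((q2_diff m).mul_const _).mul (by fun_prop))
  · exact ((differentiable_id.mul (rr_diff m)).mul (by fun_prop))

lemma E3_diff (m : ℕ) (ρ : ℝ) : Differentiable ℝ (E3 m ρ) := by
  unfold E3
  refine Differentiable.add (Differentiable.add ?_ ?_) ?_
  · exact ((differentiable_id.mul (q1_diff m)).mul_const _)
  · exact ((((q2_diff m).mul (by fun_prop)).mul_const _).mul_const _)
  · exact ((((differentiable_id.mul (rr_diff m)).mul (by fun_prop)).mul_const _).mul_const _)

lemma E4_diff (m : ℕ) (ρ : ℝ) : Differentiable ℝ (E4 m ρ) := by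
  unfold E4
  refine Differentiable.add (Differentiable.add ?_ ?_) ?_
  · exact (((differentiable_id.mul (q1_diff m)).mul_const _).mul_const _)
  · exact ((((q2_diff m).mul_const _).mul_const _).mul (by fun_prop))
  · exact (((differentiable_id.mul (rr_diff m)).mul (by fun_prop)).mul_const _)

lemma Wf_diff (m : ℕ) (ρ : ℝ) : Differentiable ℝ (Wf m ρ) := by
  unfold Wf
  exact (rr_diff m).mul (by fun_prop)

lemma Sf_diff (m : ℕ) (ρ d : ℝ) : Differentiable ℝ (Sf m ρ d) := by
  unfold Sf
  refine Differentiable.add (Differentiable.pow ?_ 2) ?_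
  · exact (((E2_diff m ρ).const_mul _).sub (E3_diff m ρ))
  · exact (((differentiable_const _ |>.mul differentiable_id).mul (E1_diff m ρ)).mul_const _).mul_const _

/-- for `d ∈ (0, 1-ρ)`, as `ℓ → ∞`,
(i) `γ(ℓ) = ((1-ρ)d/(1-ρ-d))·ℓ^{m-1}/(m-1)! + O(ℓ^{m-2})` and
(ii) `θ(ℓ) = d(d-(m-1)(1-ρ-d))/(ℓm(1-ρ-d)) + O(1/ℓ²)`. -/
theorem stmt_14 (ρ d : ℝ) (m : ℕ) (hm : 1 ≤ m)
    (hρ₁ : 0 < ρ) (hρ₂ : ρ < 1) (hd₁ : 0 < d) (hd₂ : d < 1 - ρ) :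
    ((fun ℓ : ℕ => gammaFun m ρ d ℓ -
        ((1 - ρ) * d / (1 - ρ - d)) * (ℓ : ℝ) ^ (m - 1) / ((m - 1).factorial : ℝ))
      =O[atTop] fun ℓ : ℕ => (ℓ : ℝ) ^ ((m : ℤ) - 2)) ∧
    ((fun ℓ : ℕ => thetaFun m ρ d ℓ -
        d * (d - ((m : ℝ) - 1) * (1 - ρ - d)) / ((ℓ : ℝ) * (m : ℝ) * (1 - ρ - d)))
      =O[atTop] fun ℓ : ℕ => 1 / (ℓ : ℝ) ^ 2) := by
  have hΔ : 0 < 1-ρ-d := by linarith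
  have h1ρ : 0 < 1-ρ := by linarith
  have h1d : (1:ℝ) - d ≠ 0 := by nlinarith
  have hm0 : (0:ℝ) < (m:ℝ) := by exact_mod_cast Nat.lt_of_lt_of_le Nat.zero_lt_one hm
  have hF : (0:ℝ) < ((m-1).factorial : ℝ) := by positivity
  have hSpos : 0 < Sf m ρ d 0 := by rw [Sf_zero]; positivity
  have hsq : DifferentiableAt ℝ (fun t => Real.sqrt (Sf m ρ d t)) 0 :=
    ((Sf_diff m ρ d) 0).sqrt (ne_of_gt hSpos)
  have hDHf : DifferentiableAt ℝ
      (fun t => Real.sqrt (Sf m ρ d t) + (1-d)*E2 m ρ t - E3 m ρ t) 0 :=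
    (hsq.add (((E2_diff m ρ) 0).const_mul _)).sub ((E3_diff m ρ) 0)
  have hDH0pos : 0 < Real.sqrt (Sf m ρ d 0) + (1-d)*E2 m ρ 0 - E3 m ρ 0 := by
    rw [DH_zero m ρ d hρ₁.le hΔ.le]; positivity
  have hHdiff : DifferentiableAt ℝ (Hf m ρ d) 0 := by
    unfold Hf
    exact (((E1_diff m ρ) 0).const_mul _).div hDHf (ne_of_gt hDH0pos)
  have hDP0pos : 0 < (0:ℝ)*(Hf m ρ d 0)^2 + E2 m ρ 0 * Hf m ρ d 0 + E1 m ρ 0 := by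
    rw [Hf_zero m ρ d hm hρ₁ hΔ, E2_zero, E1_zero]
    have hden : (0:ℝ) * ((1-ρ)*d/(1-ρ-d)/((m-1).factorial : ℝ))^2
        + (m:ℝ)*ρ/((m-1).factorial : ℝ) * ((1-ρ)*d/(1-ρ-d)/((m-1).factorial : ℝ))
        + (m:ℝ)*(1-ρ)*ρ/((m-1).factorial : ℝ)^2
        = (m:ℝ)*ρ*(1-ρ)^2/(((m-1).factorial : ℝ)^2*(1-ρ-d)) := by
      field_simp; ring
    rw [hden]; positivity
  have hDPdiff : DifferentiableAt ℝ
      (fun t => t*(Hf m ρ d t)^2 + E2 m ρ t * Hf m ρ d t + E1 m ρ t) 0 :=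
    ((differentiableAt_id.mul (hHdiff.pow 2)).add
      (((E2_diff m ρ) 0).mul hHdiff)).add ((E1_diff m ρ) 0)
  have hPdiff : DifferentiableAt ℝ (Pf m ρ d) 0 := by
    unfold Pf
    exact (hHdiff.mul ((hHdiff.const_mul ρ).add ((Wf_diff m ρ) 0))).div
      hDPdiff (ne_of_gt hDP0pos)
  have hT : Tendsto (fun ℓ:ℕ => 1/(ℓ:ℝ)) atTop (𝓝 0) := tendsto_one_div_atTop_nhds_zero_nat
  have evS : ∀ᶠ ℓ:ℕ in atTop, 0 < Sf m ρ d (1/(ℓ:ℝ)) :=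
    ((((Sf_diff m ρ d) 0).continuousAt.tendsto).comp hT).eventually (eventually_gt_nhds hSpos)
  have evDH : ∀ᶠ ℓ:ℕ in atTop,
      0 < Real.sqrt (Sf m ρ d (1/(ℓ:ℝ))) + (1-d)*E2 m ρ (1/(ℓ:ℝ)) - E3 m ρ (1/(ℓ:ℝ)) :=
    ((hDHf.continuousAt.tendsto).comp hT).eventually (eventually_gt_nhds hDH0pos)
  have evDP : ∀ᶠ ℓ:ℕ in atTop,
      0 < (1/(ℓ:ℝ))*(Hf m ρ d (1/(ℓ:ℝ)))^2 + E2 m ρ (1/(ℓ:ℝ)) * Hf m ρ d (1/(ℓ:ℝ))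
        + E1 m ρ (1/(ℓ:ℝ)) :=
    ((hDPdiff.continuousAt.tendsto).comp hT).eventually (eventually_gt_nhds hDP0pos)
  have evγ : ∀ᶠ ℓ:ℕ in atTop,
      gammaFun m ρ d ℓ = (ℓ:ℝ)^(m-1) * Hf m ρ d (1/(ℓ:ℝ)) := by
    filter_upwards [eventually_ge_atTop (m+1), evS, evDH] with ℓ h1 h2 h3
    exact gamma_eq m ℓ ρ d hm h1 h1d h2.le (ne_of_gt h3)
  have evθ : ∀ᶠ ℓ:ℕ in atTop,
      thetaFun m ρ d ℓ = (1/(ℓ:ℝ)) * Pf m ρ d (1/(ℓ:ℝ)) := by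
    filter_upwards [eventually_ge_atTop (m+1), evS, evDH, evDP] with ℓ h1 h2 h3 h4
    exact theta_eq m ℓ ρ d hm h1 h1d h2.le (ne_of_gt h3) (ne_of_gt h4)
  constructor
  · have o1 : (fun t => Hf m ρ d t - Hf m ρ d 0) =O[𝓝 0] (fun t => t - 0) :=
      hHdiff.isBigO_sub
    have o2 : (fun ℓ:ℕ => Hf m ρ d (1/(ℓ:ℝ)) - Hf m ρ d 0)
        =O[atTop] (fun ℓ:ℕ => 1/(ℓ:ℝ) - 0) := o1.comp_tendsto hT
    have o3 := (isBigO_refl (fun ℓ:ℕ => (ℓ:ℝ)^(m-1)) atTop).mul o2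
    refine o3.congr' ?_ ?_
    · filter_upwards [evγ] with ℓ hγ
      rw [hγ, Hf_zero m ρ d hm hρ₁ hΔ]
      ring
    · filter_upwards [eventually_ge_atTop 1] with ℓ h1
      have hℓ0 : (ℓ:ℝ) ≠ 0 := Nat.cast_ne_zero.mpr (by omega)
      rw [sub_zero, show ((m:ℤ)-2) = ((m-1:ℕ):ℤ) + (-1) by omega,
        zpow_add₀ hℓ0, zpow_natCast, zpow_neg_one, one_div]
  · have o1 : (fun t => Pf m ρ d t - Pf m ρ d 0) =O[𝓝 0] (fun t => t - 0) :=
      hPdiff.isBigO_sub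
    have o2 : (fun ℓ:ℕ => Pf m ρ d (1/(ℓ:ℝ)) - Pf m ρ d 0)
        =O[atTop] (fun ℓ:ℕ => 1/(ℓ:ℝ) - 0) := o1.comp_tendsto hT
    have o3 := (isBigO_refl (fun ℓ:ℕ => 1/(ℓ:ℝ)) atTop).mul o2
    refine o3.congr' ?_ ?_
    · filter_upwards [evθ, eventually_ge_atTop 1] with ℓ hθ h1
      have hℓ0 : (ℓ:ℝ) ≠ 0 := Nat.cast_ne_zero.mpr (by omega)
      rw [hθ, Pf_zero m ρ d hm hρ₁ hρ₂ hd₁ hd₂]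
      field_simp
    · filter_upwards [eventually_ge_atTop 1] with ℓ h1
      rw [sub_zero]
      ring
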